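/- Abstract space is invariant under η-expansion: let t be a closed λ-term, e an environment with dom(e) = fv(t), c a closure and S a stack of closed closures, and for each n ∈ ℕ let ρn be the complete Space KAM run from the state (η^n(t), e, c·S), with η^n(t) taken as part of the initial code. Then the abstract space of ρn equals the abstract space of ρ0, and the space of ρn is O(log n · space(ρ0)). -/

import Mathlib

set_option autoImplicit false

/-! λ-terms with variable names in ℕ. -/
inductive Term : Type
  | var : ℕ → Term
  | lam : ℕ → Term → Term
  | app : Term → Term → Term
deriving DecidableEq

namespace Term

/-- Free variables. -/
def fv : Term → Finset ℕ
  | var x => {x}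
  | lam x t => fv t \ {x}
  | app t u => fv t ∪ fv u

/-- A term is closed if it has no free variables. -/
def closed (t : Term) : Prop := t.fv = ∅

/-- Substitution of `u` for the free occurrences of `x`; it is capture-avoiding
whenever the substituted term `u` is closed, which is the only case arising in
Closed Call-by-Name. -/
def subst (x : ℕ) (u : Term) : Term → Term
  | var y => if y = x then u else var y
  | lam y t => if y = x then lam y t else lam y (subst x u t)
  | app t r => app (subst x u t) (subst x u r)

/-- In-order (left-to-right) enumeration of the constructors (as subterm occurrences). -/
def inorder : Term → List Term
  | var x => [var x]
  | lam x t => lam x t :: inorder t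
  | app t u => inorder t ++ app t u :: inorder u

/-- Membership in the deterministic λ-calculus `Λdet`: the right subterm of every
application is a variable or an abstraction. -/
def IsDet : Term → Prop
  | var _ => True
  | lam _ t => IsDet t
  | app t u => IsDet t ∧ IsDet u ∧ ((∃ x, u = var x) ∨ ∃ x r, u = lam x r)

end Term

/-- Weak head reduction: `(λx.t) u r1 … rh →wh t{x:=u} r1 … rh`. -/
inductive Whr : Term → Term → Prop
  | beta (x : ℕ) (t u : Term) : Whr (Term.app (Term.lam x t) u) (Term.subst x u t)
  | appL {t t' : Term} (u : Term) : Whr t t' → Whr (Term.app t u) (Term.app t' u)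

def WhNormal (t : Term) : Prop := ∀ u, ¬ Whr t u

/-- `NSteps R n a b`: exactly `n` `R`-steps from `a` to `b`. -/
inductive NSteps {α : Type _} (R : α → α → Prop) : ℕ → α → α → Prop
  | refl (a : α) : NSteps R 0 a a
  | head {a b c : α} {n : ℕ} : R a b → NSteps R n b c → NSteps R (n + 1) a c

/-! Closures and (local) environments. -/
mutual
  inductive Clo : Type
    | mk : Term → Env → Clo
  inductive Env : Type
    | nil : Env
    | cons : ℕ → Clo → Env → Env
end

def Env.lookup : Env → ℕ → Option Clo
  | .nil, _ => none
  | .cons y c e, x => if y = x then some c else Env.lookup e x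

def Env.dom : Env → Finset ℕ
  | .nil => ∅
  | .cons x _ e => insert x (Env.dom e)

/-- Restriction `e|s` of an environment to a set of variables. -/
def Env.restrict : Env → Finset ℕ → Env
  | .nil, _ => .nil
  | .cons x c e, s => if x ∈ s then .cons x c (Env.restrict e s) else Env.restrict e s

mutual
  /-- Decoding of a closure into a λ-term. -/
  def Clo.decode : Clo → Term
    | .mk t e => Env.decode t e
  /-- Decoding: `(t, ε)↓ = t`, `(t, [x←c]·e)↓ = (t{x:=c↓}, e)↓`. -/
  def Env.decode : Term → Env → Term
    | t, .nil => t
    | t, .cons x c e => Env.decode (Term.subst x (Clo.decode c) t) e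
end

mutual
  /-- Hereditary number of closures in a closure (without sharing). -/
  def Clo.count : Clo → ℕ
    | .mk _ e => 1 + Env.count e
  def Env.count : Env → ℕ
    | .nil => 0
    | .cons _ c e => Clo.count c + Env.count e
end

mutual
  /-- A closure `(t,e)` is closed: `fv t ⊆ dom e` and hereditarily so. -/
  def Clo.Closed : Clo → Prop
    | .mk t e => t.fv ⊆ e.dom ∧ Env.ClosedE e
  def Env.ClosedE : Env → Prop
    | .nil => True
    | .cons _ c e => Clo.Closed c ∧ Env.ClosedE e
end

mutual
  /-- Environment domain invariant: `dom e = fv t`, hereditarily. -/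
  def Clo.DomInv : Clo → Prop
    | .mk t e => e.dom = t.fv ∧ Env.DomInvE e
  def Env.DomInvE : Env → Prop
    | .nil => True
    | .cons _ c e => Clo.DomInv c ∧ Env.DomInvE e
end

/-- Size of the left address of (the first occurrence of) `u` in the code `t0`:
the binary length of its index in the in-order enumeration of the constructors of `t0`. -/
def addrSize (t0 u : Term) : ℕ := Nat.size (t0.inorder.idxOf u)

mutual
  /-- Size of a closure, relative to the initial code `t0`. -/
  def Clo.size : Term → Clo → ℕ
    | t0, .mk u e => addrSize t0 u + Env.sizeE t0 e
  /-- Size of an environment, relative to the initial code `t0`. -/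
  def Env.sizeE : Term → Env → ℕ
    | _, .nil => 0
    | t0, .cons x c e => addrSize t0 (Term.var x) + Clo.size t0 c + Env.sizeE t0 e
end

def stackSize (t0 : Term) (S : List Clo) : ℕ := (S.map (Clo.size t0)).sum

/-- States of the (Naive/Space) KAM. -/
structure State where
  tm : Term
  env : Env
  stk : List Clo

/-- Size of a state, relative to the initial code `t0`. -/
def State.size (t0 : Term) (s : State) : ℕ :=
  addrSize t0 s.tm + Env.sizeE t0 s.env + stackSize t0 s.stk

/-- Closure count of a state: total number of closures occurring in it,
hereditarily and without sharing (the active term/environment pair is a closure). -/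
def State.count (s : State) : ℕ :=
  1 + Env.count s.env + (s.stk.map Clo.count).sum

def State.decode (s : State) : Term :=
  s.stk.foldl (fun a c => Term.app a c.decode) (Env.decode s.tm s.env)

def initState (t : Term) : State := ⟨t, .nil, []⟩

/-! The Naive KAM. -/
inductive NK : State → State → Prop
  | sea (t u : Term) (e : Env) (S : List Clo) :
      NK ⟨.app t u, e, S⟩ ⟨t, e, .mk u e :: S⟩
  | beta (x : ℕ) (t : Term) (e : Env) (c : Clo) (S : List Clo) :
      NK ⟨.lam x t, e, c :: S⟩ ⟨t, .cons x c e, S⟩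
  | sub {x : ℕ} {e : Env} {u : Term} {e' : Env} (S : List Clo) :
      Env.lookup e x = some (.mk u e') → NK ⟨.var x, e, S⟩ ⟨u, e', S⟩

def NKFinal (s : State) : Prop := ∀ s', ¬ NK s s'

/-- Naive KAM runs counting the number of β-transitions. -/
inductive NKRun : ℕ → State → State → Prop
  | refl (s : State) : NKRun 0 s s
  | sea {t u : Term} {e : Env} {S : List Clo} {s' : State} {n : ℕ} :
      NKRun n ⟨t, e, .mk u e :: S⟩ s' → NKRun n ⟨.app t u, e, S⟩ s'
  | beta {x : ℕ} {t : Term} {e : Env} {c : Clo} {S : List Clo} {s' : State} {n : ℕ} :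
      NKRun n ⟨t, .cons x c e, S⟩ s' → NKRun (n + 1) ⟨.lam x t, e, c :: S⟩ s'
  | sub {x : ℕ} {e : Env} {u : Term} {e' : Env} {S : List Clo} {s' : State} {n : ℕ} :
      Env.lookup e x = some (.mk u e') → NKRun n ⟨u, e', S⟩ s' → NKRun n ⟨.var x, e, S⟩ s'

/-! The Space KAM. -/
inductive SK : State → State → Prop
  | seav {t : Term} {x : ℕ} {e : Env} {c : Clo} (S : List Clo) :
      Env.lookup e x = some c →
      SK ⟨.app t (.var x), e, S⟩ ⟨t, e.restrict t.fv, c :: S⟩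
  | seanv {t u : Term} {e : Env} (S : List Clo) :
      (∀ x, u ≠ .var x) →
      SK ⟨.app t u, e, S⟩ ⟨t, e.restrict t.fv, .mk u (e.restrict u.fv) :: S⟩
  | betaw {x : ℕ} {t : Term} {e : Env} (c : Clo) (S : List Clo) :
      x ∉ t.fv → SK ⟨.lam x t, e, c :: S⟩ ⟨t, e, S⟩
  | betanw {x : ℕ} {t : Term} {e : Env} (c : Clo) (S : List Clo) :
      x ∈ t.fv → SK ⟨.lam x t, e, c :: S⟩ ⟨t, .cons x c e, S⟩
  | sub {x : ℕ} {e : Env} {u : Term} {e' : Env} (S : List Clo) :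
      Env.lookup e x = some (.mk u e') → SK ⟨.var x, e, S⟩ ⟨u, e', S⟩

def SKFinal (s : State) : Prop := ∀ s', ¬ SK s s'

/-- Space KAM runs counting the number of β-transitions (`→βw` and `→β¬w`). -/
inductive SKRun : ℕ → State → State → Prop
  | refl (s : State) : SKRun 0 s s
  | seav {t : Term} {x : ℕ} {e : Env} {c : Clo} {S : List Clo} {s' : State} {n : ℕ} :
      Env.lookup e x = some c →
      SKRun n ⟨t, e.restrict t.fv, c :: S⟩ s' → SKRun n ⟨.app t (.var x), e, S⟩ s'
  | seanv {t u : Term} {e : Env} {S : List Clo} {s' : State} {n : ℕ} :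
      (∀ x, u ≠ .var x) →
      SKRun n ⟨t, e.restrict t.fv, .mk u (e.restrict u.fv) :: S⟩ s' →
      SKRun n ⟨.app t u, e, S⟩ s'
  | betaw {x : ℕ} {t : Term} {e : Env} {c : Clo} {S : List Clo} {s' : State} {n : ℕ} :
      x ∉ t.fv → SKRun n ⟨t, e, S⟩ s' → SKRun (n + 1) ⟨.lam x t, e, c :: S⟩ s'
  | betanw {x : ℕ} {t : Term} {e : Env} {c : Clo} {S : List Clo} {s' : State} {n : ℕ} :
      x ∈ t.fv → SKRun n ⟨t, .cons x c e, S⟩ s' → SKRun (n + 1) ⟨.lam x t, e, c :: S⟩ s'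
  | sub {x : ℕ} {e : Env} {u : Term} {e' : Env} {S : List Clo} {s' : State} {n : ℕ} :
      Env.lookup e x = some (.mk u e') → SKRun n ⟨u, e', S⟩ s' → SKRun n ⟨.var x, e, S⟩ s'

/-! Concrete combinators. -/

/-- I := λx.x -/
def tmI : Term := .lam 0 (.var 0)
/-- θ := λx.λy.y (x x y)  (variables: x := 0, y := 1) -/
def tmTheta : Term := .lam 0 (.lam 1 (.app (.var 1) (.app (.app (.var 0) (.var 0)) (.var 1))))
/-- fix := θ θ -/
def tmFix : Term := .app tmTheta tmTheta
/-- x x y -/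
def xxy : Term := .app (.app (.var 0) (.var 0)) (.var 1)
/-- toyaux := λf.λz. z f f I  (f := 3, z := 2) -/
def tmToyaux : Term := .lam 3 (.lam 2 (.app (.app (.app (.var 2) (.var 3)) (.var 3)) tmI))
/-- toy := fix toyaux -/
def tmToy : Term := .app tmFix tmToyaux

/-- Scott encoding of binary strings (false = 0, true = 1; x0 := 4, x1 := 5, xε := 6):
`⟨ε⟩ := λx0.λx1.λxε.xε`, `⟨b·r⟩ := λx0.λx1.λxε.xb ⟨r⟩`. -/
def encStr : List Bool → Term
  | [] => .lam 4 (.lam 5 (.lam 6 (.var 6)))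
  | b :: r => .lam 4 (.lam 5 (.lam 6 (.app (.var (if b then 5 else 4)) (encStr r))))

/-- A variable fresh for `t`. -/
def freshVar (t : Term) : ℕ := t.fv.sup id + 1

/-- η-expansion: `η(t) := λx. t x` with `x ∉ fv t`. -/
def Term.eta (t : Term) : Term := .lam (freshVar t) (.app t (.var (freshVar t)))

/-- n-fold η-expansion. -/
def etaN (n : ℕ) (t : Term) : Term := Term.eta^[n] t

/-! Environment families for the Naive KAM scrolling invariant
(variables: x := 0, y := 1, z := 2, f := 3, x0 := 4, x1 := 5, xε := 6). -/

/-- `e0 := [x←(θ,ε)]·[y←(toyaux,ε)]`, `e(i+1) := [x←(x,ei)]·[y←(y,ei)]`. -/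
def eE : ℕ → Env
  | 0 => .cons 0 (.mk tmTheta .nil) (.cons 1 (.mk tmToyaux .nil) .nil)
  | i + 1 => .cons 0 (.mk (.var 0) (eE i)) (.cons 1 (.mk (.var 1) (eE i)) .nil)

/-- `e″0 := ε`, `e″(i+1) := [xε←(I,e′i)]·[x1←(f,e′i)]·[x0←(f,e′i)]·e″i`
(with `e′i` inlined). -/
def eDD (s : List Bool) : ℕ → Env
  | 0 => .nil
  | i + 1 =>
    let ep : Env := .cons 2 (.mk (encStr (s.drop i)) (eDD s i)) (.cons 3 (.mk xxy (eE i)) .nil)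
    .cons 6 (.mk tmI ep) (.cons 5 (.mk (.var 3) ep) (.cons 4 (.mk (.var 3) ep) (eDD s i)))

/-- `e′i := [z←(⟨b(i+1)⋯bn⟩, e″i)]·[f←(x x y, ei)]`. -/
def eP (s : List Bool) (i : ℕ) : Env :=
  .cons 2 (.mk (encStr (s.drop i)) (eDD s i)) (.cons 3 (.mk xxy (eE i)) .nil)

/-! The family `tn` for the abstract-time overhead explosion
(variables `xi := i`). -/

/-- `x0 x1 ⋯ xn`. -/
def varsApp : ℕ → Term
  | 0 => .var 0
  | n + 1 => .app (varsApp n) (.var (n + 1))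

/-- Term component of `Sn`: `x0 x0` for `n = 0`, `x0 ⋯ xn` for `n ≥ 1`. -/
def sTerm : ℕ → Term
  | 0 => .app (.var 0) (.var 0)
  | n + 1 => varsApp (n + 1)

/-- `e0 := [x0←(I,ε)]`, `e(n+1) := [x(n+1)←Sn]·en`. -/
def eN : ℕ → Env
  | 0 => .cons 0 (.mk tmI .nil) .nil
  | n + 1 => .cons (n + 1) (.mk (sTerm n) (eN n)) (eN n)

/-- `Sn := (sTerm n, en)`. -/
def sClo (n : ℕ) : Clo := .mk (sTerm n) (eN n)

/-- `Ci⟨t⟩ := λxi. t (x0 ⋯ xi)` (with `C0⟨t⟩ = λx0. t (x0 x0)`). -/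
def cPlug (i : ℕ) (t : Term) : Term := .lam i (.app t (sTerm i))

/-- `C0⟨C1⟨⋯Cn⟨t⟩⋯⟩⟩`. -/
def nest (n : ℕ) (t : Term) : Term := (List.range (n + 1)).foldr cPlug t

/-- `tn := C0⟨C1⟨⋯Cn⟨λy.I⟩⋯⟩⟩ I`. -/
def tN (n : ℕ) : Term := .app (nest n (.lam 1 tmI)) tmI

/-! Global-copy scrolling terms (s′ := 7, z := 2, x := 0, f := 3). -/

/-- `λf.λs′. s′ f f z` (free variable z). -/
def tScroll : Term :=
  .lam 3 (.lam 7 (.app (.app (.app (.var 7) (.var 3)) (.var 3)) (.var 2)))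

/-- `glCpy := λx.( fix (λf.λs′. s′ f f x) ) x`. -/
def glCpy : Term :=
  .lam 0 (.app (.app tmFix
    (.lam 3 (.lam 7 (.app (.app (.app (.var 7) (.var 3)) (.var 3)) (.var 0)))))
    (.var 0))

/-! The Space LAM. -/

structure LState where
  dump : List (Clo × List Clo)
  tm : Term
  env : Env
  stk : List Clo

inductive LAM : LState → LState → Prop
  | sea {D : List (Clo × List Clo)} {t u : Term} {e : Env} {S : List Clo} :
      LAM ⟨D, .app t u, e, S⟩ ⟨(.mk t (e.restrict t.fv), S) :: D, u, e.restrict u.fv, []⟩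
  | ret {D : List (Clo × List Clo)} {u : Term} {e' : Env} {S : List Clo}
      {x : ℕ} {t : Term} {e : Env} :
      LAM ⟨(.mk u e', S) :: D, .lam x t, e, []⟩ ⟨D, u, e', .mk (.lam x t) e :: S⟩
  | betaw {D : List (Clo × List Clo)} {x : ℕ} {t : Term} {e : Env} {c : Clo} {S : List Clo} :
      x ∉ t.fv → LAM ⟨D, .lam x t, e, c :: S⟩ ⟨D, t, e, S⟩
  | betanw {D : List (Clo × List Clo)} {x : ℕ} {t : Term} {e : Env} {c : Clo} {S : List Clo} :
      x ∈ t.fv → LAM ⟨D, .lam x t, e, c :: S⟩ ⟨D, t, .cons x c e, S⟩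
  | sub {D : List (Clo × List Clo)} {x : ℕ} {e : Env} {u : Term} {e' : Env} {S : List Clo} :
      Env.lookup e x = some (.mk u e') → LAM ⟨D, .var x, e, S⟩ ⟨D, u, e', S⟩

def LFinal (ls : LState) : Prop := ∀ ls', ¬ LAM ls ls'

/-- The Space KAM state `(t,e,S)` seen as the Space LAM state `(ε,t,e,S)`. -/
def embed (s : State) : LState := ⟨[], s.tm, s.env, s.stk⟩

def lInit (t : Term) : LState := ⟨[], t, .nil, []⟩

def LState.size (t0 : Term) (ls : LState) : ℕ :=
  (ls.dump.map (fun p => Clo.size t0 p.1 + stackSize t0 p.2)).sum +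
    addrSize t0 ls.tm + Env.sizeE t0 ls.env + stackSize t0 ls.stk

/-- A LAM-sequence from `a` whose first state with empty dump after `a` is its target. -/
inductive LRunToEmpty : LState → LState → Prop
  | single {a b : LState} : LAM a b → b.dump = [] → LRunToEmpty a b
  | cons {a b c : LState} : LAM a b → b.dump ≠ [] → LRunToEmpty b c → LRunToEmpty a c

/-! Log-sensitive Turing machines. -/

/-- Input-tape alphabet {0, 1, L, R}. -/
inductive ISym : Type | zero | one | lend | rend
deriving DecidableEq

/-- Work-tape alphabet {0, 1, □}. -/
inductive WSym : Type | zero | one | blank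
deriving DecidableEq

/-- Head moves. -/
inductive Move : Type | L | R | N
deriving DecidableEq

/-- A log-sensitive Turing machine: states `Fin n`, initial state, final states
`qtrue = s1` and `qfalse = s0`, and a deterministic transition function reading the
current state and the two scanned symbols, writing on the work tape, moving both
heads, and changing state (`none` = halt). -/
structure TM where
  n : ℕ
  start : Fin n
  qtrue : Fin n
  qfalse : Fin n
  δ : Fin n → ISym → WSym → Option (Fin n × WSym × Move × Move)

/-- A configuration: state, input-head position (on the tape `L i R`), and the
work tape split as (left part, reversed) / scanned symbol / (right part). -/
structure Config (M : TM) where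
  q : Fin M.n
  ipos : ℕ
  wl : List WSym
  wcur : WSym
  wr : List WSym

/-- The symbol of the input tape `L i R` at a given position. -/
def inputAt (i : List Bool) (p : ℕ) : ISym :=
  if p = 0 then .lend
  else if h : p - 1 < i.length then (if i.get ⟨p - 1, h⟩ then .one else .zero)
  else .rend

def moveIpos (p : ℕ) : Move → ℕ
  | .L => p - 1
  | .R => p + 1
  | .N => p

def moveWork (wl : List WSym) (c : WSym) (wr : List WSym) : Move → List WSym × WSym × List WSym
  | .L => match wl with
    | [] => ([], .blank, c :: wr)
    | a :: l => (l, a, c :: wr)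
  | .R => match wr with
    | [] => (c :: wl, .blank, [])
    | a :: r => (c :: wl, a, r)
  | .N => (wl, c, wr)

/-- One transition of the TM `M` on input `i`. -/
def TMStep (M : TM) (i : List Bool) (c c' : Config M) : Prop :=
  ∃ q' w mi mw, M.δ c.q (inputAt i c.ipos) c.wcur = some (q', w, mi, mw) ∧
    c'.q = q' ∧ c'.ipos = moveIpos c.ipos mi ∧
    (c'.wl, c'.wcur, c'.wr) = moveWork c.wl w c.wr mw

def initConfig (M : TM) : Config M := ⟨M.start, 0, [], .blank, []⟩

/-- Number of work-tape cells used by a configuration. -/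
def Config.workSize {M : TM} (c : Config M) : ℕ := c.wl.length + 1 + c.wr.length

def TMFinal (M : TM) (i : List Bool) (c : Config M) : Prop := ∀ c', ¬ TMStep M i c c'

/-- `⟨1⟩ := λx.λy.x` and `⟨0⟩ := λx.λy.y`. -/
def encBool (b : Bool) : Term :=
  if b then .lam 0 (.lam 1 (.var 0)) else .lam 0 (.lam 1 (.var 1))

/-! ### Auxiliary lemmas for Statement 5 -/

namespace EtaAux

open Relation

/-- A state is closed. -/
def SClosed (s : State) : Prop :=
  s.tm.fv ⊆ s.env.dom ∧ Env.ClosedE s.env ∧ ∀ c ∈ s.stk, Clo.Closed c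

lemma env_eq_nil_of_dom_empty : ∀ e : Env, e.dom = ∅ → e = .nil
  | .nil, _ => rfl
  | .cons x c e, h => by
      exfalso
      have : x ∈ Env.dom (.cons x c e) := by simp [Env.dom]
      rw [h] at this; simp at this

lemma inorder_ne_nil : ∀ u : Term, u.inorder ≠ []
  | .var x => by simp [Term.inorder]
  | .lam x t => by simp [Term.inorder]
  | .app t u => by
      simp only [Term.inorder]
      intro h
      rcases List.append_eq_nil_iff.1 h with ⟨_, h2⟩
      simp at h2

lemma etaN_succ (n : ℕ) (t : Term) : etaN (n+1) t = Term.eta (etaN n t) := by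
  simp [etaN, Function.iterate_succ_apply']

lemma freshVar_of_closed {u : Term} (h : u.fv = ∅) : freshVar u = 1 := by
  simp [freshVar, h]

lemma eta_of_closed {u : Term} (h : u.fv = ∅) :
    Term.eta u = .lam 1 (.app u (.var 1)) := by
  simp [Term.eta, freshVar_of_closed h]

lemma fv_eta {u : Term} (h : u.fv = ∅) : (Term.eta u).fv = ∅ := by
  rw [eta_of_closed h]
  simp [Term.fv, h]

lemma fv_etaN {t : Term} (ht : t.fv = ∅) : ∀ n, (etaN n t).fv = ∅ := by
  intro n; induction n with
  | zero => simpa [etaN] using ht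
  | succ n ih => rw [etaN_succ]; exact fv_eta ih

/-- Determinism of the Space KAM. -/
lemma skDet {a b b' : State} (h1 : SK a b) (h2 : SK a b') : b = b' := by
  cases h1 <;> cases h2 <;> try rfl
  case seav.seav h h' => simp_all
  case seav.seanv h h' => exact absurd rfl (h' _)
  case seanv.seav h h' => exact absurd rfl (h _)
  case betaw.betanw h h' => exact absurd h' h
  case betanw.betaw h h' => exact absurd h h'
  case sub.sub h h' => simp_all

lemma rtg_cases {a b s : State} (h : SK a b) (hr : ReflTransGen SK a s) :
    s = a ∨ ReflTransGen SK b s := by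
  rcases hr.cases_head with rfl | ⟨b', hb', hrest⟩
  · exact Or.inl rfl
  · right; rwa [skDet h hb']

lemma final_rtg {f s : State} (hf : SKFinal f) (h : ReflTransGen SK f s) : s = f := by
  rcases h.cases_head with rfl | ⟨b', hb', _⟩
  · rfl
  · exact absurd hb' (hf b')

/-- All states reachable from `a` lie on the (finite) path from `a` to the final `f`. -/
lemma pathList {a f : State} (h : ReflTransGen SK a f) (hf : SKFinal f) :
    ∃ L : List State, (∀ s, ReflTransGen SK a s → s ∈ L) ∧ (∀ s ∈ L, ReflTransGen SK a s) := by
  induction h using ReflTransGen.head_induction_on with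
  | refl =>
      refine ⟨[f], fun s hs => ?_, fun s hs => ?_⟩
      · simp [final_rtg hf hs]
      · simp at hs; subst hs; exact ReflTransGen.refl
  | head h' _ ih =>
      rename_i a' c' _
      obtain ⟨L, hL1, hL2⟩ := ih
      refine ⟨a' :: L, fun s hs => ?_, fun s hs => ?_⟩
      · rcases rtg_cases h' hs with rfl | hcs
        · simp
        · simp [hL1 s hcs]
      · rcases List.mem_cons.1 hs with rfl | hs
        · exact ReflTransGen.refl
        · exact ReflTransGen.head h' (hL2 s hs)

lemma le_fold (f : State → ℕ) : ∀ (L : List State) (a : State), a ∈ L →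
    f a ≤ (L.map f).foldr max 0
  | b :: L, a, h => by
      rcases List.mem_cons.1 h with rfl | h
      · simp only [List.map_cons, List.foldr_cons]; exact le_max_left _ _
      · simp only [List.map_cons, List.foldr_cons]
        exact le_trans (le_fold f L a h) (le_max_right _ _)

lemma fold_mem (f : State → ℕ) : ∀ L : List State, L ≠ [] →
    ∃ a ∈ L, (L.map f).foldr max 0 = f a
  | [b], _ => ⟨b, by simp⟩
  | b :: b' :: L, _ => by
      obtain ⟨a, ha, hfa⟩ := fold_mem f (b' :: L) (by simp)
      rcases le_or_gt ((List.map f (b' :: L)).foldr max 0) (f b) with h | h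
      · exact ⟨b, by simp, by simp only [List.map_cons, List.foldr_cons] at *; omega⟩
      · exact ⟨a, by simp [List.mem_cons.1 ha], by
          simp only [List.map_cons, List.foldr_cons] at *; omega⟩

/-! ### Environment lemmas -/

lemma lookup_of_mem_dom : ∀ (e : Env) (x : ℕ), x ∈ e.dom → ∃ c, Env.lookup e x = some c
  | .nil, x, h => by simp [Env.dom] at h
  | .cons y c e, x, h => by
      simp only [Env.dom, Finset.mem_insert] at h
      by_cases hxy : y = x
      · exact ⟨c, by simp [Env.lookup, hxy]⟩
      · rcases h with rfl | h
        · exact absurd rfl hxy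
        · obtain ⟨c', hc'⟩ := lookup_of_mem_dom e x h
          exact ⟨c', by simp [Env.lookup, hxy, hc']⟩

lemma lookup_closed : ∀ (e : Env), Env.ClosedE e → ∀ (x : ℕ) (c : Clo),
    Env.lookup e x = some c → c.Closed
  | .nil, _, x, c, h => by simp [Env.lookup] at h
  | .cons y c' e, he, x, c, h => by
      obtain ⟨hc', he'⟩ := he
      by_cases hxy : y = x
      · simp [Env.lookup, hxy] at h; rwa [← h]
      · simp only [Env.lookup, hxy, if_false] at h
        exact lookup_closed e he' x c h

lemma restrict_dom_mem : ∀ (e : Env) (s : Finset ℕ) (x : ℕ),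
    x ∈ s → x ∈ e.dom → x ∈ (e.restrict s).dom
  | .nil, s, x, _, h => by simp [Env.dom] at h
  | .cons y c e, s, x, hs, h => by
      simp only [Env.dom, Finset.mem_insert] at h
      simp only [Env.restrict]
      rcases h with rfl | h
      · simp [hs, Env.dom]
      · by_cases hy : y ∈ s
        · simp only [hy, if_true, Env.dom, Finset.mem_insert]
          exact Or.inr (restrict_dom_mem e s x hs h)
        · simp only [hy, if_false]
          exact restrict_dom_mem e s x hs h

lemma restrict_closedE : ∀ (e : Env) (s : Finset ℕ), Env.ClosedE e →
    Env.ClosedE (e.restrict s)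
  | .nil, s, _ => by simp [Env.restrict, Env.ClosedE]
  | .cons y c e, s, h => by
      obtain ⟨hc, he⟩ := h
      simp only [Env.restrict]
      by_cases hy : y ∈ s
      · simp only [hy, if_true]; exact ⟨hc, restrict_closedE e s he⟩
      · simp only [hy, if_false]; exact restrict_closedE e s he

/-- Closedness is preserved by the Space KAM. -/
lemma sclosed_step {a b : State} (h : SK a b) (ha : SClosed a) : SClosed b := by
  obtain ⟨h1, h2, h3⟩ := ha
  cases h with
  | seav S hl =>
      rename_i t x e cc
      refine ⟨fun y hy => ?_, restrict_closedE _ _ h2, fun c' hc' => ?_⟩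
      · exact restrict_dom_mem e _ y hy (h1 (by simp [Term.fv, hy]))
      · rcases List.mem_cons.1 hc' with rfl | hc'
        · exact lookup_closed e h2 x c' hl
        · exact h3 c' hc'
  | seanv S hnv =>
      rename_i t u e
      refine ⟨fun y hy => ?_, restrict_closedE _ _ h2, fun c' hc' => ?_⟩
      · exact restrict_dom_mem e _ y hy (h1 (by simp [Term.fv, hy]))
      · rcases List.mem_cons.1 hc' with rfl | hc'
        · exact ⟨fun y hy => restrict_dom_mem e _ y hy (h1 (by simp [Term.fv, hy])),
            restrict_closedE _ _ h2⟩
        · exact h3 c' hc'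
  | betaw cc S hx =>
      rename_i x t e
      refine ⟨fun y hy => h1 ?_, h2, fun c' hc' => h3 c' (by simp [hc'])⟩
      simp only [Term.fv, Finset.mem_sdiff, Finset.mem_singleton]
      exact ⟨hy, fun hxy => hx (hxy ▸ hy)⟩
  | betanw cc S hx =>
      rename_i x t e
      refine ⟨fun y hy => ?_, ⟨h3 _ (by simp), h2⟩, fun c' hc' => h3 c' (by simp [hc'])⟩
      simp only [Env.dom, Finset.mem_insert]
      by_cases hxy : y = x
      · exact Or.inl hxy
      · exact Or.inr (h1 (by simp [Term.fv, hy, hxy]))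
  | sub S hl =>
      rename_i x e u e'
      have hcl := lookup_closed e h2 x _ hl
      exact ⟨hcl.1, hcl.2, h3⟩

lemma sclosed_rtg {a b : State} (h : ReflTransGen SK a b) (ha : SClosed a) : SClosed b := by
  induction h with
  | refl => exact ha
  | tail _ hstep ih => exact sclosed_step hstep ih

/-- Progress: a closed final state is an abstraction with an empty stack. -/
lemma progress {tm : Term} {e : Env} {S : List Clo}
    (hcl : SClosed ⟨tm, e, S⟩) (hf : SKFinal ⟨tm, e, S⟩) :
    (∃ x b, tm = .lam x b) ∧ S = [] := by
  obtain ⟨h1, h2, h3⟩ := hcl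
  match tm, S with
  | .var x, S =>
      exfalso
      obtain ⟨cc, hcc⟩ := lookup_of_mem_dom e x (h1 (by simp [Term.fv]))
      obtain ⟨u, e'⟩ := cc
      exact hf _ (SK.sub S hcc)
  | .lam x b, [] => exact ⟨⟨x, b, rfl⟩, rfl⟩
  | .lam x b, cc :: S =>
      exfalso
      by_cases hx : x ∈ b.fv
      · exact hf _ (SK.betanw cc S hx)
      · exact hf _ (SK.betaw cc S hx)
  | .app t1 (.var x), S =>
      exfalso
      obtain ⟨cc, hcc⟩ := lookup_of_mem_dom e x (h1 (by simp [Term.fv]))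
      exact hf _ (SK.seav S hcc)
  | .app t1 (.lam y r), S =>
      exact absurd (SK.seanv S (fun x h => by cases h)) (hf _)
  | .app t1 (.app r1 r2), S =>
      exact absurd (SK.seanv S (fun x h => by cases h)) (hf _)

/-- From any closed state with a nonempty stack that reaches a final state,
a β-redex state is reachable. -/
lemma toRedex {f : State} (hf : SKFinal f) :
    ∀ a : State, ReflTransGen SK a f → SClosed a → a.stk ≠ [] →
    ∃ (x : ℕ) (b : Term) (e' : Env) (c' : Clo) (S' : List Clo),
      ReflTransGen SK a ⟨.lam x b, e', c' :: S'⟩ := by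
  intro a h
  induction h using ReflTransGen.head_induction_on with
  | refl =>
      intro hcl hne
      obtain ⟨f1, f2, f3⟩ := f
      obtain ⟨_, rfl⟩ := progress hcl hf
      exact absurd rfl hne
  | head h' hrest ih =>
      intro hcl hne
      cases h' with
      | seav S hl =>
          obtain ⟨x, b, e', c', S', hr⟩ := ih (sclosed_step (SK.seav S hl) hcl) (by simp)
          exact ⟨x, b, e', c', S', ReflTransGen.head (SK.seav S hl) hr⟩
      | seanv S hnv =>
          obtain ⟨x, b, e', c', S', hr⟩ := ih (sclosed_step (SK.seanv S hnv) hcl) (by simp)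
          exact ⟨x, b, e', c', S', ReflTransGen.head (SK.seanv S hnv) hr⟩
      | betaw cc S hx =>
          rename_i x t e
          exact ⟨x, t, e, cc, S, ReflTransGen.refl⟩
      | betanw cc S hx =>
          rename_i x t e
          exact ⟨x, t, e, cc, S, ReflTransGen.refl⟩
      | sub S hl =>
          obtain ⟨x, b, e', c', S', hr⟩ := ih (sclosed_step (SK.sub S hl) hcl) (by simpa using hne)
          exact ⟨x, b, e', c', S', ReflTransGen.head (SK.sub S hl) hr⟩

/-! ### Size bounds -/

/-- Uniform bound on address sizes relative to code `t0`. -/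
def aB (t0 : Term) : ℕ := Nat.size t0.inorder.length

lemma addr_le (t0 u : Term) : addrSize t0 u ≤ aB t0 :=
  Nat.size_le_size List.idxOf_le_length

mutual
theorem cloSizeLe (t0 : Term) : ∀ cl : Clo, Clo.size t0 cl + aB t0 ≤ 2 * Clo.count cl * aB t0
  | .mk u e => by
      have he := envSizeLe t0 e
      have hu := addr_le t0 u
      have : 2 * Clo.count (.mk u e) * aB t0 = 2 * Env.count e * aB t0 + (aB t0 + aB t0) := by
        simp only [Clo.count]; ring
      rw [this]
      simp only [Clo.size]
      omega
theorem envSizeLe (t0 : Term) : ∀ e : Env, Env.sizeE t0 e ≤ 2 * Env.count e * aB t0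
  | .nil => by simp [Env.sizeE, Env.count]
  | .cons x cl e => by
      have h1 := cloSizeLe t0 cl
      have h2 := envSizeLe t0 e
      have hx := addr_le t0 (.var x)
      have : 2 * Env.count (.cons x cl e) * aB t0
          = 2 * Clo.count cl * aB t0 + 2 * Env.count e * aB t0 := by
        simp only [Env.count]; ring
      rw [this]
      simp only [Env.sizeE]
      omega
end

lemma stackSizeLe (t0 : Term) : ∀ S : List Clo,
    stackSize t0 S ≤ 2 * (S.map Clo.count).sum * aB t0
  | [] => by simp [stackSize]
  | cl :: S => by
      have h1 := cloSizeLe t0 cl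
      have h2 := stackSizeLe t0 S
      have : 2 * ((cl :: S).map Clo.count).sum * aB t0
          = 2 * Clo.count cl * aB t0 + 2 * (S.map Clo.count).sum * aB t0 := by
        simp only [List.map_cons, List.sum_cons]; ring
      rw [this]
      simp only [stackSize, List.map_cons, List.sum_cons] at *
      omega

lemma stateSizeLe (t0 : Term) (s : State) : s.size t0 ≤ 2 * s.count * aB t0 := by
  obtain ⟨tm, e, S⟩ := s
  have h1 := addr_le t0 tm
  have h2 := envSizeLe t0 e
  have h3 := stackSizeLe t0 S
  have : 2 * State.count ⟨tm, e, S⟩ * aB t0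
      = (aB t0 + aB t0) + 2 * Env.count e * aB t0 + 2 * (S.map Clo.count).sum * aB t0 := by
    simp only [State.count]; ring
  rw [this]
  simp only [State.size]
  omega

/-! ### Structure of the run from an η-expanded term -/

lemma step1 {t : Term} (ht : t.fv = ∅) (n : ℕ) (c : Clo) (S : List Clo) :
    SK ⟨etaN (n+1) t, .nil, c :: S⟩ ⟨.app (etaN n t) (.var 1), .cons 1 c .nil, S⟩ := by
  rw [etaN_succ, eta_of_closed (fv_etaN ht n)]
  exact SK.betanw c S (by simp [Term.fv])

lemma step2 {t : Term} (ht : t.fv = ∅) (n : ℕ) (c : Clo) (S : List Clo) :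
    SK ⟨.app (etaN n t) (.var 1), .cons 1 c .nil, S⟩ ⟨etaN n t, .nil, c :: S⟩ := by
  have hl : Env.lookup (.cons 1 c .nil) 1 = some c := by simp [Env.lookup]
  have h := SK.seav (t := etaN n t) (x := 1) (e := .cons 1 c .nil) (c := c) S hl
  have hr : (Env.cons 1 c .nil).restrict (etaN n t).fv = .nil := by
    rw [fv_etaN ht n]; simp [Env.restrict]
  rwa [hr] at h

lemma rtg_P {t : Term} (ht : t.fv = ∅) (c : Clo) (S : List Clo) (n : ℕ) :
    ReflTransGen SK ⟨etaN n t, .nil, c :: S⟩ ⟨t, .nil, c :: S⟩ := by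
  induction n with
  | zero => exact ReflTransGen.refl
  | succ n ih =>
      exact ReflTransGen.head (step1 ht n c S) (ReflTransGen.head (step2 ht n c S) ih)

lemma count_P (u : Term) (c : Clo) (S : List Clo) :
    State.count ⟨u, .nil, c :: S⟩ = 1 + Clo.count c + (S.map Clo.count).sum := by
  simp only [State.count, Env.count, List.map_cons, List.sum_cons]
  omega

lemma count_Q (u : Term) (c : Clo) (S : List Clo) :
    State.count ⟨u, .cons 1 c .nil, S⟩ = 1 + Clo.count c + (S.map Clo.count).sum := by
  simp only [State.count, Env.count]
  omega

lemma reach_P {t : Term} (ht : t.fv = ∅) (c : Clo) (S : List Clo) :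
    ∀ (n : ℕ) (s : State), ReflTransGen SK ⟨etaN n t, .nil, c :: S⟩ s →
    ReflTransGen SK ⟨t, .nil, c :: S⟩ s ∨ s.count = State.count ⟨t, .nil, c :: S⟩ := by
  intro n
  induction n with
  | zero => intro s hs; exact Or.inl (by simpa [etaN] using hs)
  | succ n ih =>
      intro s hs
      rcases rtg_cases (step1 ht n c S) hs with rfl | hs
      · right; rw [count_P, count_P]
      · rcases rtg_cases (step2 ht n c S) hs with rfl | hs
        · right; rw [count_Q, count_P]
        · exact ih s hs

/-! ### Length of the inorder traversal of `etaN n t` -/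

lemma inorder_len_eta {u : Term} (h : u.fv = ∅) :
    (Term.eta u).inorder.length = u.inorder.length + 3 := by
  rw [eta_of_closed h]
  simp [Term.inorder]

lemma inorder_len_etaN {t : Term} (ht : t.fv = ∅) (n : ℕ) :
    (etaN n t).inorder.length = t.inorder.length + 3 * n := by
  induction n with
  | zero => simp [etaN]
  | succ n ih =>
      rw [etaN_succ, inorder_len_eta (fv_etaN ht n), ih]
      ring

/-! ### Arithmetic -/

lemma three_lt_pow (m : ℕ) : m + 3 < 2 ^ (m + 2) := by
  induction m with
  | zero => norm_num
  | succ m ih =>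
      have : 2 ^ (m + 1 + 2) = 2 ^ (m + 2) + 2 ^ (m + 2) := by ring
      omega

lemma size_le_log (T1 n : ℕ) (hT : 1 ≤ T1) :
    Nat.size (T1 + 3 * n) ≤ (T1 + 4) * Nat.log 2 (n + 2) := by
  rw [Nat.size_le]
  set Lg := Nat.log 2 (n + 2) with hLg
  have hL : 1 ≤ Lg := Nat.log_pos (by norm_num) (by omega)
  have h1 : n + 2 < 2 ^ (Lg + 1) := Nat.lt_pow_succ_log_self (by norm_num) _
  have h2 : T1 + 3 < 2 ^ (T1 + 2) := three_lt_pow T1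
  have step1 : T1 + 3 * n < (T1 + 3) * (n + 2) := by nlinarith
  have step2 : (T1 + 3) * (n + 2) < 2 ^ (T1 + 2) * 2 ^ (Lg + 1) := by
    apply Nat.mul_lt_mul_of_lt_of_le h2 (le_of_lt h1)
    positivity
  have step3 : 2 ^ (T1 + 2) * 2 ^ (Lg + 1) = 2 ^ (T1 + Lg + 3) := by
    rw [← pow_add]; ring_nf
  have step4 : 2 ^ (T1 + Lg + 3) ≤ 2 ^ ((T1 + 4) * Lg) := by
    apply Nat.pow_le_pow_right (by norm_num)
    nlinarith
  omega

/-- `lam x b ≠ b`. -/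
lemma lam_ne (x : ℕ) (b : Term) : Term.lam x b ≠ b := by
  intro h
  have := congrArg sizeOf h
  simp only [Term.lam.sizeOf_spec] at this
  omega

lemma indexOf_cons_self_ne {b h0 : Term} (hne : b ≠ h0) (tl : List Term) :
    1 ≤ Nat.size (List.idxOf b (h0 :: tl)) := by
  rw [List.idxOf_cons]
  have : (h0 == b) = false := by
    simp only [beq_eq_false_iff_ne, ne_eq]
    exact fun h => hne h.symm
  rw [this]
  simp only [cond_false]
  have : List.idxOf b tl + 1 ≠ 0 := by omega
  rcases Nat.eq_zero_or_pos (Nat.size (List.idxOf b tl + 1)) with h | h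
  · rw [Nat.size_eq_zero] at h; omega
  · exact h

lemma indexOf_zero_head {b h0 : Term} (tl : List Term)
    (h : Nat.size (List.idxOf b (h0 :: tl)) = 0) : b = h0 := by
  rw [Nat.size_eq_zero] at h
  rw [List.idxOf_cons] at h
  by_cases hb : h0 = b
  · exact hb.symm
  · have : (h0 == b) = false := by simp [hb]
    rw [this] at h
    simp at h

end EtaAux

/-- abstract space is invariant under η-expansion, and the
(concrete) space of the run from `η^n(t)` is `O(log n · space(ρ0))`.
The maxima of the closure counts along the runs are expressed by mutual
cofinality of the sets of closure counts of the states of the two runs. -/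
theorem space_kam_abstract_space_eta_invariant
    (t : Term) (ht : t.closed) (e : Env) (c : Clo) (S : List Clo)
    (he : e.dom = t.fv) (hc : c.Closed) (hS : ∀ c' ∈ S, Clo.Closed c')
    (hterm : ∃ f, Relation.ReflTransGen SK ⟨t, e, c :: S⟩ f ∧ SKFinal f) :
    (∀ n : ℕ,
      (∀ s, Relation.ReflTransGen SK ⟨etaN n t, e, c :: S⟩ s →
        ∃ s', Relation.ReflTransGen SK ⟨t, e, c :: S⟩ s' ∧ s.count ≤ s'.count) ∧
      (∀ s', Relation.ReflTransGen SK ⟨t, e, c :: S⟩ s' →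
        ∃ s, Relation.ReflTransGen SK ⟨etaN n t, e, c :: S⟩ s ∧ s'.count ≤ s.count)) ∧
    ∃ S0 : ℕ,
      ((∀ s, Relation.ReflTransGen SK ⟨t, e, c :: S⟩ s → s.size t ≤ S0) ∧
        (∃ s, Relation.ReflTransGen SK ⟨t, e, c :: S⟩ s ∧ s.size t = S0)) ∧
      ∃ k : ℕ, 0 < k ∧ ∀ (n : ℕ) (s : State),
        Relation.ReflTransGen SK ⟨etaN n t, e, c :: S⟩ s →
        s.size (etaN n t) ≤ k * (Nat.log 2 (n + 2) * S0 + 1) := by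
  have ht' : t.fv = ∅ := ht
  have he' : e = Env.nil := EtaAux.env_eq_nil_of_dom_empty e (by rw [he, ht'])
  subst he'
  obtain ⟨f, hf, hffin⟩ := hterm
  obtain ⟨L, hL1, hL2⟩ := EtaAux.pathList hf hffin
  set start0 : State := ⟨t, .nil, c :: S⟩ with hstart0
  have hmem0 : start0 ∈ L := hL1 start0 Relation.ReflTransGen.refl
  set S0 : ℕ := (L.map (State.size t)).foldr max 0 with hS0def
  set C : ℕ := (L.map State.count).foldr max 0 with hCdef
  have hclosed0 : EtaAux.SClosed start0 := by
    refine ⟨by rw [hstart0]; simp only; rw [ht']; simp, trivial, fun c' hc' => ?_⟩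
    rcases List.mem_cons.1 hc' with rfl | hc'
    · exact hc
    · exact hS c' hc'
  have hS0pos : 1 ≤ S0 := by
    obtain ⟨x, b, e', c', S', hr⟩ :=
      EtaAux.toRedex hffin start0 hf hclosed0 (by rw [hstart0]; simp)
    obtain ⟨h0, tl, hio⟩ : ∃ h0 tl, t.inorder = h0 :: tl := by
      cases hcase : t.inorder with
      | nil => exact absurd hcase (EtaAux.inorder_ne_nil t)
      | cons a l => exact ⟨a, l, rfl⟩
    rcases Nat.eq_zero_or_pos (State.size t ⟨.lam x b, e', c' :: S'⟩) with hz | hp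
    · have haddr : addrSize t (.lam x b) = 0 := by
        simp only [State.size] at hz; omega
      have hhead : Term.lam x b = h0 := by
        apply EtaAux.indexOf_zero_head tl
        rwa [addrSize, hio] at haddr
      have hbne : b ≠ h0 := fun hb => EtaAux.lam_ne x b (hhead.trans hb.symm)
      have h1 : 1 ≤ addrSize t b := by
        rw [addrSize, hio]; exact EtaAux.indexOf_cons_self_ne hbne tl
      by_cases hx : x ∈ b.fv
      · have hreach : Relation.ReflTransGen SK start0 ⟨b, .cons x c' e', S'⟩ :=
          hr.tail (SK.betanw c' S' hx)
        have h2 : 1 ≤ State.size t ⟨b, .cons x c' e', S'⟩ := by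
          simp only [State.size]; omega
        exact le_trans h2 (EtaAux.le_fold _ L _ (hL1 _ hreach))
      · have hreach : Relation.ReflTransGen SK start0 ⟨b, e', S'⟩ :=
          hr.tail (SK.betaw c' S' hx)
        have h2 : 1 ≤ State.size t ⟨b, e', S'⟩ := by
          simp only [State.size]; omega
        exact le_trans h2 (EtaAux.le_fold _ L _ (hL1 _ hreach))
    · exact le_trans hp (EtaAux.le_fold _ L _ (hL1 _ hr))
  constructor
  · intro n
    constructor
    · intro s hs
      rcases EtaAux.reach_P ht' c S n s hs with h | h
      · exact ⟨s, h, le_refl _⟩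
      · exact ⟨start0, Relation.ReflTransGen.refl, le_of_eq h⟩
    · intro s' hs'
      exact ⟨s', (EtaAux.rtg_P ht' c S n).trans hs', le_refl _⟩
  · refine ⟨S0, ⟨fun s hs => EtaAux.le_fold _ L s (hL1 s hs), ?_⟩, ?_⟩
    · obtain ⟨a, haL, ha⟩ := EtaAux.fold_mem (State.size t) L
        (fun h => by rw [h] at hmem0; simp at hmem0)
      exact ⟨a, hL2 a haL, ha.symm⟩
    · have hT1 : 1 ≤ t.inorder.length := List.length_pos_iff.2 (EtaAux.inorder_ne_nil t)
      refine ⟨2 * C * (t.inorder.length + 4) + 1, by omega, ?_⟩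
      intro n s hs
      have hcount : s.count ≤ C := by
        rcases EtaAux.reach_P ht' c S n s hs with h | h
        · exact EtaAux.le_fold State.count L s (hL1 s h)
        · rw [h]; exact EtaAux.le_fold State.count L start0 hmem0
      have hsize : s.size (etaN n t) ≤ 2 * s.count * EtaAux.aB (etaN n t) :=
        EtaAux.stateSizeLe _ s
      have haB : EtaAux.aB (etaN n t) ≤ (t.inorder.length + 4) * Nat.log 2 (n + 2) := by
        rw [EtaAux.aB, EtaAux.inorder_len_etaN ht' n]
        exact EtaAux.size_le_log t.inorder.length n hT1
      have hLg : 1 ≤ Nat.log 2 (n + 2) := Nat.log_pos (by norm_num) (by omega)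
      have hmono : Nat.log 2 (n + 2) ≤ Nat.log 2 (n + 2) * S0 :=
        Nat.le_mul_of_pos_right _ hS0pos
      calc s.size (etaN n t) ≤ 2 * s.count * EtaAux.aB (etaN n t) := hsize
        _ ≤ 2 * C * ((t.inorder.length + 4) * Nat.log 2 (n + 2)) :=
            Nat.mul_le_mul (Nat.mul_le_mul_left 2 hcount) haB
        _ = (2 * C * (t.inorder.length + 4)) * Nat.log 2 (n + 2) := by ring
        _ ≤ (2 * C * (t.inorder.length + 4)) * (Nat.log 2 (n + 2) * S0) :=
            Nat.mul_le_mul_left _ hmono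
        _ ≤ (2 * C * (t.inorder.length + 4) + 1) * (Nat.log 2 (n + 2) * S0 + 1) :=
            Nat.mul_le_mul (by omega) (by omega)
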